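/- arXiv:2106.03425 — 2 statements merged into one kernel-verified Lean document; each statement's English description precedes it below -/
import Mathlib

section
/- Let G be a graph, and suppose there exists a set S of at most k edges of G such that contracting the edges of S yields a planar graph. Then there exists a set T of at most k vertices of G such that deleting T from G yields a planar graph. -/
open SimpleGraph


private lemma reach_sup_edge {V : Type*} {F : SimpleGraph V} {a b u v : V}
    (h : (F ⊔ edge a b).Reachable u v) :
    F.Reachable u v ∨ (F.Reachable u a ∧ F.Reachable b v) ∨
      (F.Reachable u b ∧ F.Reachable a v) := by
  obtain ⟨w⟩ := h
  induction w with
  | nil => exact Or.inl (Reachable.refl _)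
  | @cons u x v h p ih =>
    rcases h with h | h
    · rcases ih with h1 | ⟨h1, h2⟩ | ⟨h1, h2⟩
      · exact Or.inl (h.reachable.trans h1)
      · exact Or.inr (Or.inl ⟨h.reachable.trans h1, h2⟩)
      · exact Or.inr (Or.inr ⟨h.reachable.trans h1, h2⟩)
    · rw [edge_adj] at h
      rcases h.1 with ⟨rfl, rfl⟩ | ⟨rfl, rfl⟩
      · rcases ih with h1 | ⟨h1, h2⟩ | ⟨h1, h2⟩
        · exact Or.inr (Or.inl ⟨Reachable.refl _, h1⟩)
        · exact Or.inr (Or.inl ⟨Reachable.refl _, h2⟩)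
        · exact Or.inl h2
      · rcases ih with h1 | ⟨h1, h2⟩ | ⟨h1, h2⟩
        · exact Or.inr (Or.inr ⟨Reachable.refl _, h1⟩)
        · exact Or.inl h2
        · exact Or.inr (Or.inr ⟨Reachable.refl _, h2⟩)

private lemma card_components_bound {V : Type*} [Fintype V] (S : Finset (Sym2 V)) :
    Fintype.card V ≤ Nat.card (fromEdgeSet (↑S : Set (Sym2 V))).ConnectedComponent + S.card := by
  classical
  induction S using Finset.induction_on with
  | empty =>
    simp only [Finset.coe_empty, fromEdgeSet_empty, Finset.card_empty, add_zero]
    have hb : Function.Bijective ((⊥ : SimpleGraph V).connectedComponentMk) := by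
      constructor
      · intro u v huv
        exact reachable_bot.mp (SimpleGraph.ConnectedComponent.exact huv)
      · exact fun c => c.exists_rep
    rw [← Nat.card_eq_fintype_card, Nat.card_eq_of_bijective _ hb]
  | @insert e s he ih =>
    induction e using Sym2.ind with
    | _ a b =>
    have hG : fromEdgeSet (↑(insert s(a, b) s) : Set (Sym2 V)) =
        fromEdgeSet (↑s : Set (Sym2 V)) ⊔ edge a b := by
      rw [Finset.coe_insert, Set.insert_eq, fromEdgeSet_union, sup_comm]
      rfl
    rw [hG, Finset.card_insert_of_notMem he]
    set F := fromEdgeSet (↑s : Set (Sym2 V)) with hF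
    haveI : Finite F.ConnectedComponent := Quot.finite _
    haveI : Finite (F ⊔ edge a b).ConnectedComponent := Quot.finite _
    have hkey : Nat.card F.ConnectedComponent ≤
        Nat.card (F ⊔ edge a b).ConnectedComponent + 1 := by
      set g : F.ConnectedComponent → Option (F ⊔ edge a b).ConnectedComponent :=
        fun c => if c = F.connectedComponentMk b then none
          else some (c.map (SimpleGraph.Hom.ofLE le_sup_left)) with hg
      have hginj : Function.Injective g := by
        intro x y hxy
        by_cases hx : x = F.connectedComponentMk b <;>
          by_cases hy : y = F.connectedComponentMk b
        · rw [hx, hy]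
        · simp [hg, hx, hy] at hxy
        · simp [hg, hx, hy] at hxy
        · simp only [hg, if_neg hx, if_neg hy, Option.some.injEq] at hxy
          obtain ⟨u, rfl⟩ := x.exists_rep
          obtain ⟨v, rfl⟩ := y.exists_rep
          have hxy' : (F ⊔ edge a b).connectedComponentMk u =
              (F ⊔ edge a b).connectedComponentMk v := hxy
          have hr := reach_sup_edge (SimpleGraph.ConnectedComponent.exact hxy')
          rcases hr with h1 | ⟨h1, h2⟩ | ⟨h1, h2⟩
          · exact SimpleGraph.ConnectedComponent.sound h1
          · exact absurd (SimpleGraph.ConnectedComponent.sound h2.symm) hy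
          · exact absurd (SimpleGraph.ConnectedComponent.sound h1) hx
      have := Nat.card_le_card_of_injective g hginj
      rwa [Finite.card_option] at this
    omega



/-- `H` is a minor of `G`, witnessed by a family of nonempty, connected, pairwise disjoint
branch sets, one for each vertex of `H`, such that adjacent vertices of `H` have branch
sets joined by an edge of `G`. -/
def SimpleGraph.IsMinorOf {W V : Type*} (H : SimpleGraph W) (G : SimpleGraph V) : Prop :=
  ∃ B : W → Set V,
    (∀ w, (G.induce (B w)).Connected) ∧
    (Pairwise fun w₁ w₂ => Disjoint (B w₁) (B w₂)) ∧
    (∀ w₁ w₂, H.Adj w₁ w₂ → ∃ u ∈ B w₁, ∃ v ∈ B w₂, G.Adj u v)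

private lemma isMinorOf_of_injective_hom {W V V' : Type*} {K : SimpleGraph W}
    {G : SimpleGraph V} {H : SimpleGraph V'} (f : G →g H) (hf : Function.Injective f)
    (h : K.IsMinorOf G) : K.IsMinorOf H := by
  obtain ⟨B, hconn, hdisj, hadj⟩ := h
  refine ⟨fun w => f '' B w, fun w => ?_, ?_, ?_⟩
  · refine SimpleGraph.Connected.map
      (⟨fun x => ⟨f x.1, ⟨x.1, x.2, rfl⟩⟩, fun hxy => f.map_adj hxy⟩ :
        (G.induce (B w)) →g (H.induce (f '' B w))) ?_ (hconn w)
    rintro ⟨_, v, hv, rfl⟩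
    exact ⟨⟨v, hv⟩, rfl⟩
  · intro w₁ w₂ hne
    exact (Set.disjoint_image_iff hf).mpr (hdisj hne)
  · intro w₁ w₂ hadj'
    obtain ⟨u, hu, v, hv, huv⟩ := hadj w₁ w₂ hadj'
    exact ⟨f u, ⟨u, hu, rfl⟩, f v, ⟨v, hv, rfl⟩, f.map_adj huv⟩

/-- Planarity, via Wagner's characterization: a graph is planar iff it has neither a
`K₅` minor nor a `K_{3,3}` minor. -/
def SimpleGraph.IsPlanar {V : Type*} (G : SimpleGraph V) : Prop :=
  ¬ (completeGraph (Fin 5)).IsMinorOf G ∧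
  ¬ (completeBipartiteGraph (Fin 3) (Fin 3)).IsMinorOf G

/-- The graph obtained from `G` by deleting the vertex set `S` (with all incident edges),
i.e. the subgraph induced on `V \ S`. -/
abbrev SimpleGraph.deleteVertexSet {V : Type*} (G : SimpleGraph V) (S : Set V) :
    SimpleGraph {v : V // v ∉ S} :=
  G.induce {v : V | v ∉ S}

/-- The graph obtained from `G` by contracting the set `S` of edges: its vertices are the
connected components of the spanning subgraph with edge set `S`, and two distinct
components are adjacent iff `G` has an edge between them (loops and multiple edges
arising from the contraction are discarded). -/
def SimpleGraph.contractEdges {V : Type*} (G : SimpleGraph V) (S : Set (Sym2 V)) :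
    SimpleGraph (SimpleGraph.fromEdgeSet S).ConnectedComponent where
  Adj c d := c ≠ d ∧ ∃ u v : V, G.Adj u v ∧
    (SimpleGraph.fromEdgeSet S).connectedComponentMk u = c ∧
    (SimpleGraph.fromEdgeSet S).connectedComponentMk v = d
  symm := by
    constructor
    rintro c d ⟨hne, u, v, hadj, hu, hv⟩
    exact ⟨hne.symm, v, u, hadj.symm, hv, hu⟩
  loopless := by constructor; rintro c ⟨hne, -⟩; exact hne rfl

/-- If contracting some set `S` of at most `k` edges of `G` yields a
planar graph, then deleting some set `T` of at most `k` vertices of `G` yields a planar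
graph (Golovach, van 't Hof, Paulusma). -/
theorem planar_vertex_deletion_of_planar_edge_contraction {V : Type*} [Fintype V]
    [DecidableEq V] (G : SimpleGraph V) (k : ℕ)
    (h : ∃ S : Finset (Sym2 V), ↑S ⊆ G.edgeSet ∧ S.card ≤ k ∧
      (G.contractEdges ↑S).IsPlanar) :
    ∃ T : Finset V, T.card ≤ k ∧ (G.deleteVertexSet ↑T).IsPlanar := by
  classical
  obtain ⟨S, hSE, hSk, hplanar⟩ := h
  set F := fromEdgeSet (↑S : Set (Sym2 V)) with hF
  have hrep : ∀ c : F.ConnectedComponent, ∃ v, F.connectedComponentMk v = c :=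
    fun c => c.exists_rep
  choose rep hrep using hrep
  set T : Finset V := Finset.univ.filter (fun v => ¬ rep (F.connectedComponentMk v) = v)
    with hT
  have hinj : ∀ u v : V, u ∉ T → v ∉ T →
      F.connectedComponentMk u = F.connectedComponentMk v → u = v := by
    intro u v hu hv huv
    simp only [hT, Finset.mem_filter, Finset.mem_univ, true_and, not_not] at hu hv
    rw [← hu, ← hv, huv]
  haveI : Finite F.ConnectedComponent := Quot.finite _
  haveI := Fintype.ofFinite F.ConnectedComponent
  have hcardT : T.card ≤ S.card := by
    have h1 := card_components_bound S
    have h2 : (Finset.univ.filter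
        (fun v => ¬ ¬ rep (F.connectedComponentMk v) = v)).card
        = Nat.card F.ConnectedComponent := by
      rw [Nat.card_eq_fintype_card, ← Finset.card_univ]
      refine Finset.card_bij (fun v _ => F.connectedComponentMk v) (fun _ _ => Finset.mem_univ _)
        ?_ ?_
      · intro u hu v hv huv
        simp only [Finset.mem_filter, Finset.mem_univ, true_and, not_not] at hu hv
        rw [← hu, ← hv]
        exact congrArg rep huv
      · intro c _
        refine ⟨rep c, ?_, hrep c⟩
        simp only [Finset.mem_filter, Finset.mem_univ, true_and, not_not, hrep c]
    have h3 := Finset.card_filter_add_card_filter_not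
      (s := (Finset.univ : Finset V))
      (p := fun v => ¬ rep (F.connectedComponentMk v) = v)
    rw [h2, Finset.card_univ, ← hT] at h3
    rw [← hF] at h1
    omega
  refine ⟨T, hcardT.trans hSk, ?_⟩
  have hex : ∃ f : (G.deleteVertexSet ↑T) →g (G.contractEdges ↑S),
      Function.Injective f := by
    refine ⟨⟨fun x => F.connectedComponentMk x.1, ?_⟩, ?_⟩
    · rintro ⟨u, hu⟩ ⟨v, hv⟩ hadj
      have hGadj : G.Adj u v := hadj
      refine ⟨?_, u, v, hGadj, rfl, rfl⟩
      intro hc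
      exact hGadj.ne (hinj u v hu hv hc)
    · rintro ⟨u, hu⟩ ⟨v, hv⟩ huv
      exact Subtype.ext (hinj u v hu hv huv)
  obtain ⟨f, hf⟩ := hex
  exact ⟨fun hm => hplanar.1 (isMinorOf_of_injective_hom f hf hm),
    fun hm => hplanar.2 (isMinorOf_of_injective_hom f hf hm)⟩
end

section
/- Let H be the m-grid and let U be a set of s vertices contained in the central (m − 2ℓ)-grid of H, where ℓ = ⌊s^{1/4}⌋ and m > 2ℓ. Then H contains the ℓ-grid as a minor in such a way that the model (branch set) of each vertex of the ℓ-grid intersects U. -/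
open SimpleGraph

/-- The `m`-grid: the Cartesian (box) product of two paths on `m` vertices. -/
def gridGraph (m : ℕ) : SimpleGraph (Fin m × Fin m) :=
  SimpleGraph.pathGraph m □ SimpleGraph.pathGraph m

/-- The vertex set of the central `(m - 2ℓ)`-grid of the `m`-grid: the vertices remaining
after peeling off the outermost `ℓ` layers. -/
def centralGridVerts (m ℓ : ℕ) : Set (Fin m × Fin m) :=
  {p | ℓ ≤ (p.1 : ℕ) ∧ (p.1 : ℕ) < m - ℓ ∧ ℓ ≤ (p.2 : ℕ) ∧ (p.2 : ℕ) < m - ℓ}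

namespace GMH

lemma grid_adj {m : ℕ} {u v : Fin m × Fin m} :
    (gridGraph m).Adj u v ↔
      ((u.1.val + 1 = v.1.val ∨ v.1.val + 1 = u.1.val) ∧ u.2 = v.2) ∨
      ((u.2.val + 1 = v.2.val ∨ v.2.val + 1 = u.2.val) ∧ u.1 = v.1) := by
  show (SimpleGraph.pathGraph m □ SimpleGraph.pathGraph m).Adj u v ↔ _
  rw [SimpleGraph.boxProd_adj, SimpleGraph.pathGraph_adj, SimpleGraph.pathGraph_adj]

lemma grid_adj_swap {m : ℕ} {u v : Fin m × Fin m} (h : (gridGraph m).Adj u v) :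
    (gridGraph m).Adj u.swap v.swap := by
  rw [grid_adj] at h ⊢
  rcases h with ⟨h1, h2⟩ | ⟨h1, h2⟩
  · exact Or.inr ⟨h1, h2⟩
  · exact Or.inl ⟨h1, h2⟩

/-- Step relation: adjacency within a vertex set. -/
def Step {V : Type*} (G : SimpleGraph V) (S : Set V) (a b : V) : Prop :=
  a ∈ S ∧ b ∈ S ∧ G.Adj a b

lemma step_symm {V : Type*} (G : SimpleGraph V) (S : Set V) : Symmetric (Step G S) :=
  fun _ _ ⟨ha, hb, h⟩ => ⟨hb, ha, h.symm⟩

lemma rtg_reachable {V : Type*} {G : SimpleGraph V} {S : Set V} {a b : V}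
    (h : Relation.ReflTransGen (Step G S) a b) :
    ∀ (ha : a ∈ S) (hb : b ∈ S), (G.induce S).Reachable ⟨a, ha⟩ ⟨b, hb⟩ := by
  induction h with
  | refl => intro ha hb; rfl
  | tail _ hstep ih =>
      intro ha hc
      exact (ih ha hstep.1).trans (SimpleGraph.Adj.reachable hstep.2.2)

lemma induce_connected {V : Type*} {G : SimpleGraph V} {S : Set V} {v0 : V} (h0 : v0 ∈ S)
    (h : ∀ v ∈ S, Relation.ReflTransGen (Step G S) v v0) : (G.induce S).Connected := by
  have hne : Nonempty S := ⟨⟨v0, h0⟩⟩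
  refine ⟨fun u v => ?_⟩
  have hu := rtg_reachable (h u.val u.2) u.2 h0
  have hv := rtg_reachable (h v.val v.2) v.2 h0
  exact hu.trans hv.symm


lemma chain_h {m : ℕ} {S : Set (Fin m × Fin m)} {b : ℕ} (hb : b < m) :
    ∀ (d a : ℕ) (had : a + d < m),
      (∀ t (ht : t < m), a ≤ t → t ≤ a + d → ((⟨t, ht⟩ : Fin m), (⟨b, hb⟩ : Fin m)) ∈ S) →
      Relation.ReflTransGen (Step (gridGraph m) S)
        ((⟨a, by (try dsimp only); omega⟩ : Fin m), (⟨b, hb⟩ : Fin m)) ((⟨a + d, had⟩ : Fin m), (⟨b, hb⟩ : Fin m))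
  | 0, a, had, hmem => Relation.ReflTransGen.refl
  | (d+1), a, had, hmem => by
      have ih := chain_h hb d a (by (try dsimp only); omega) (fun t ht h1 h2 => hmem t ht h1 (by (try dsimp only); omega))
      refine ih.tail ⟨hmem (a+d) (by (try dsimp only); omega) (by (try dsimp only); omega) (by (try dsimp only); omega),
        hmem (a+d+1) (by (try dsimp only); omega) (by (try dsimp only); omega) (by (try dsimp only); omega), ?_⟩
      rw [grid_adj]
      exact Or.inl ⟨Or.inl rfl, rfl⟩

lemma chain_v {m : ℕ} {S : Set (Fin m × Fin m)} {a : ℕ} (ha : a < m) :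
    ∀ (d b : ℕ) (hbd : b + d < m),
      (∀ t (ht : t < m), b ≤ t → t ≤ b + d → ((⟨a, ha⟩ : Fin m), (⟨t, ht⟩ : Fin m)) ∈ S) →
      Relation.ReflTransGen (Step (gridGraph m) S)
        ((⟨a, ha⟩ : Fin m), (⟨b, by (try dsimp only); omega⟩ : Fin m)) ((⟨a, ha⟩ : Fin m), (⟨b + d, hbd⟩ : Fin m))
  | 0, b, hbd, hmem => Relation.ReflTransGen.refl
  | (d+1), b, hbd, hmem => by
      have ih := chain_v ha d b (by (try dsimp only); omega) (fun t ht h1 h2 => hmem t ht h1 (by (try dsimp only); omega))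
      refine ih.tail ⟨hmem (b+d) (by (try dsimp only); omega) (by (try dsimp only); omega) (by (try dsimp only); omega),
        hmem (b+d+1) (by (try dsimp only); omega) (by (try dsimp only); omega) (by (try dsimp only); omega), ?_⟩
      rw [grid_adj]
      exact Or.inr ⟨Or.inl rfl, rfl⟩

lemma chain_horiz {m : ℕ} {S : Set (Fin m × Fin m)} {b a1 a2 : ℕ} (hb : b < m)
    (h1 : a1 < m) (h2 : a2 < m)
    (hmem : ∀ t (ht : t < m), min a1 a2 ≤ t → t ≤ max a1 a2 →
      ((⟨t, ht⟩ : Fin m), (⟨b, hb⟩ : Fin m)) ∈ S) :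
    Relation.ReflTransGen (Step (gridGraph m) S)
      ((⟨a1, h1⟩ : Fin m), (⟨b, hb⟩ : Fin m)) ((⟨a2, h2⟩ : Fin m), (⟨b, hb⟩ : Fin m)) := by
  rcases le_total a1 a2 with h | h
  · obtain ⟨d, rfl⟩ : ∃ d, a2 = a1 + d := ⟨a2 - a1, by (try dsimp only); omega⟩
    exact chain_h hb d a1 h2 (fun t ht ht1 ht2 => hmem t ht (by (try dsimp only); omega) (by (try dsimp only); omega))
  · obtain ⟨d, rfl⟩ : ∃ d, a1 = a2 + d := ⟨a1 - a2, by (try dsimp only); omega⟩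
    exact ((@Relation.ReflTransGen.symmetric _ _ ⟨fun a b h => step_symm _ _ h⟩).symm _ _)
      (chain_h hb d a2 h1 (fun t ht ht1 ht2 => hmem t ht (by (try dsimp only); omega) (by (try dsimp only); omega)))

lemma chain_vert {m : ℕ} {S : Set (Fin m × Fin m)} {a b1 b2 : ℕ} (ha : a < m)
    (h1 : b1 < m) (h2 : b2 < m)
    (hmem : ∀ t (ht : t < m), min b1 b2 ≤ t → t ≤ max b1 b2 →
      ((⟨a, ha⟩ : Fin m), (⟨t, ht⟩ : Fin m)) ∈ S) :
    Relation.ReflTransGen (Step (gridGraph m) S)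
      ((⟨a, ha⟩ : Fin m), (⟨b1, h1⟩ : Fin m)) ((⟨a, ha⟩ : Fin m), (⟨b2, h2⟩ : Fin m)) := by
  rcases le_total b1 b2 with h | h
  · obtain ⟨d, rfl⟩ : ∃ d, b2 = b1 + d := ⟨b2 - b1, by (try dsimp only); omega⟩
    exact chain_v ha d b1 h2 (fun t ht ht1 ht2 => hmem t ht (by (try dsimp only); omega) (by (try dsimp only); omega))
  · obtain ⟨d, rfl⟩ : ∃ d, b1 = b2 + d := ⟨b1 - b2, by (try dsimp only); omega⟩
    exact ((@Relation.ReflTransGen.symmetric _ _ ⟨fun a b h => step_symm _ _ h⟩).symm _ _)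
      (chain_v ha d b2 h1 (fun t ht ht1 ht2 => hmem t ht (by (try dsimp only); omega) (by (try dsimp only); omega)))

section Core

variable (m ℓ : ℕ) (X Y : ℕ → ℕ)

/-- bottom row of the tentacle of model (j,u). -/
def DL (j u : ℕ) : ℕ :=
  if j % 2 = 0 then (if j + 1 < ℓ ∧ u + 1 < ℓ then u else ℓ - 1)
  else (if 1 ≤ u then ℓ - 1 - u else ℓ - 1)

/-- top row of the tentacle of model (j,u). -/
def UH (j u : ℕ) : ℕ :=
  if j % 2 = 0 then (if 1 ≤ j ∧ 1 ≤ u then m - ℓ + u else Y (j * ℓ + u))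
  else (if j + 1 < ℓ ∧ u + 1 < ℓ then m - 1 - u else Y (j * ℓ + u))

/-- row of the rung arc owned by model (j,u). -/
def RR (j u : ℕ) : ℕ := if j % 2 = 0 then u else m - 1 - u

/-- The branch set (model) of index (j,u): a vertical tentacle through the chosen point,
a horizontal snake arc at row ℓ-1, and (possibly) a horizontal rung arc. -/
def Model (j u : ℕ) : Set (Fin m × Fin m) :=
  {v | (v.1.val = X (j * ℓ + u) ∧ DL ℓ j u ≤ v.2.val ∧ v.2.val ≤ UH m ℓ Y j u)
    ∨ (j * ℓ + u + 1 < ℓ * ℓ ∧ v.2.val = ℓ - 1 ∧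
        X (j * ℓ + u) ≤ v.1.val ∧ v.1.val < X (j * ℓ + u + 1))
    ∨ (j + 1 < ℓ ∧ u + 1 < ℓ ∧ v.2.val = RR m j u ∧
        X (j * ℓ + u) ≤ v.1.val ∧ v.1.val < X ((j + 1) * ℓ + (ℓ - 1 - u)))}

lemma kbound {ℓ j u : ℕ} (hj : j < ℓ) (hu : u < ℓ) : j * ℓ + u < ℓ * ℓ := by
  have h1 : (j + 1) * ℓ = j * ℓ + ℓ := Nat.succ_mul j ℓ
  have h2 : (j + 1) * ℓ ≤ ℓ * ℓ := Nat.mul_le_mul_right ℓ (by (try dsimp only); omega)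
  omega

lemma blocklt {ℓ j u j' u' : ℕ} (hjj : j < j') (hu : u < ℓ) : j * ℓ + u < j' * ℓ + u' := by
  have h1 : (j + 1) * ℓ = j * ℓ + ℓ := Nat.succ_mul j ℓ
  have h2 : (j + 1) * ℓ ≤ j' * ℓ := Nat.mul_le_mul_right ℓ (by (try dsimp only); omega)
  omega

lemma keq {ℓ j u j' u' : ℕ} (hu : u < ℓ) (hu' : u' < ℓ) (h : j * ℓ + u = j' * ℓ + u') :
    j = j' ∧ u = u' := by
  rcases lt_trichotomy j j' with hh | hh | hh
  · exact absurd (blocklt (u' := u') hh hu) (by (try dsimp only); omega)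
  · subst hh; omega
  · exact absurd (blocklt (u' := u) hh hu') (by (try dsimp only); omega)

lemma between {ℓ j u j' u' : ℕ} (hj' : j' + 1 < ℓ) (hu' : u' + 1 < ℓ) (hu : u < ℓ)
    (h1 : j' * ℓ + u' < j * ℓ + u) (h2 : j * ℓ + u < (j' + 1) * ℓ + (ℓ - 1 - u')) :
    (j = j' ∧ u' < u) ∨ (j = j' + 1 ∧ u < ℓ - 1 - u') := by
  have hjge : j' ≤ j := by
    by_contra hcon
    exact absurd (blocklt (u' := u') (by (try dsimp only); omega : j < j') hu) (by (try dsimp only); omega)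
  have hjle : j ≤ j' + 1 := by
    by_contra hcon
    exact absurd (blocklt (u' := u) (by (try dsimp only); omega : j' + 1 < j) (by (try dsimp only); omega : ℓ - 1 - u' < ℓ)) (by (try dsimp only); omega)
  have : j = j' ∨ j = j' + 1 := by (try dsimp only); omega
  rcases this with rfl | rfl
  · left; exact ⟨rfl, by (try dsimp only); omega⟩
  · right; exact ⟨rfl, by (try dsimp only); omega⟩

lemma hmono_le (hmono : ∀ k k', k < k' → k' < ℓ * ℓ → X k < X k')
    {k k' : ℕ} (h : k ≤ k') (h2 : k' < ℓ * ℓ) : X k ≤ X k' := by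
  rcases Nat.eq_or_lt_of_le h with rfl | h
  · exact le_refl _
  · exact le_of_lt (hmono _ _ h h2)

lemma DL_le {j u : ℕ} : DL ℓ j u ≤ ℓ - 1 := by
  unfold DL; split_ifs <;> omega

lemma UH_ge (hm : 2 * ℓ < m) (hY1 : ∀ k, k < ℓ * ℓ → ℓ ≤ Y k)
    {j u : ℕ} (hj : j < ℓ) (hu : u < ℓ) : ℓ ≤ UH m ℓ Y j u := by
  have := hY1 _ (kbound hj hu)
  unfold UH; split_ifs <;> omega

lemma UH_lt (hm : 2 * ℓ < m) (hY2 : ∀ k, k < ℓ * ℓ → Y k < m - ℓ)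
    {j u : ℕ} (hj : j < ℓ) (hu : u < ℓ) : UH m ℓ Y j u < m := by
  have := hY2 _ (kbound hj hu)
  unfold UH; split_ifs <;> omega

lemma UH_geY (hm : 2 * ℓ < m) (hY2 : ∀ k, k < ℓ * ℓ → Y k < m - ℓ)
    {j u : ℕ} (hj : j < ℓ) (hu : u < ℓ) : Y (j * ℓ + u) ≤ UH m ℓ Y j u := by
  have := hY2 _ (kbound hj hu)
  unfold UH; split_ifs <;> omega

lemma clash_TA (hm : 2 * ℓ < m) (hmono : ∀ k k', k < k' → k' < ℓ * ℓ → X k < X k')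
    (hY2 : ∀ k, k < ℓ * ℓ → Y k < m - ℓ)
    {j u j' u' a b : ℕ} (hj : j < ℓ) (hu : u < ℓ) (hj' : j' < ℓ) (hu' : u' < ℓ)
    (hkne : j * ℓ + u ≠ j' * ℓ + u')
    (hT : a = X (j * ℓ + u) ∧ DL ℓ j u ≤ b ∧ b ≤ UH m ℓ Y j u)
    (hA : j' + 1 < ℓ ∧ u' + 1 < ℓ ∧ b = RR m j' u' ∧
      X (j' * ℓ + u') ≤ a ∧ a < X ((j' + 1) * ℓ + (ℓ - 1 - u'))) : False := by
  obtain ⟨ha, hD, hU⟩ := hT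
  obtain ⟨hj'1, hu'1, hb, ha1, ha2⟩ := hA
  have hk : j * ℓ + u < ℓ * ℓ := kbound hj hu
  have hk' : j' * ℓ + u' < ℓ * ℓ := kbound hj' hu'
  have hkp : (j' + 1) * ℓ + (ℓ - 1 - u') < ℓ * ℓ := kbound hj'1 (by (try dsimp only); omega)
  have hge : j' * ℓ + u' ≤ j * ℓ + u := by
    by_contra hcon
    have := hmono _ _ (by (try dsimp only); omega : j * ℓ + u < j' * ℓ + u') hk'
    omega
  have hlt : j * ℓ + u < (j' + 1) * ℓ + (ℓ - 1 - u') := by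
    by_contra hcon
    have := hmono_le ℓ X hmono (by (try dsimp only); omega : (j' + 1) * ℓ + (ℓ - 1 - u') ≤ j * ℓ + u) hk
    omega
  have hy := hY2 _ hk
  rcases between hj'1 hu'1 hu (by (try dsimp only); omega) hlt with ⟨rfl, hlt2⟩ | ⟨rfl, hlt2⟩ <;>
  · simp only [DL, UH, RR] at hD hU hb
    split_ifs at hD hU hb <;> omega

lemma clash_TS (hmono : ∀ k k', k < k' → k' < ℓ * ℓ → X k < X k')
    {j u j' u' a b : ℕ} (hj : j < ℓ) (hu : u < ℓ)
    (hkne : j * ℓ + u ≠ j' * ℓ + u')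
    (hT : a = X (j * ℓ + u) ∧ DL ℓ j u ≤ b ∧ b ≤ UH m ℓ Y j u)
    (hS : j' * ℓ + u' + 1 < ℓ * ℓ ∧ b = ℓ - 1 ∧
      X (j' * ℓ + u') ≤ a ∧ a < X (j' * ℓ + u' + 1)) : False := by
  obtain ⟨ha, -, -⟩ := hT
  obtain ⟨hk'1, -, ha1, ha2⟩ := hS
  have hk : j * ℓ + u < ℓ * ℓ := kbound hj hu
  have hge : j' * ℓ + u' ≤ j * ℓ + u := by
    by_contra hcon
    have := hmono _ _ (by (try dsimp only); omega : j * ℓ + u < j' * ℓ + u') (by (try dsimp only); omega)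
    omega
  have hlt : j * ℓ + u < j' * ℓ + u' + 1 := by
    by_contra hcon
    have := hmono_le ℓ X hmono (by (try dsimp only); omega : j' * ℓ + u' + 1 ≤ j * ℓ + u) hk
    omega
  omega

lemma clash_SA (hm : 2 * ℓ < m)
    {j' u' b : ℕ} (hb : b = ℓ - 1)
    (hA : j' + 1 < ℓ ∧ u' + 1 < ℓ ∧ b = RR m j' u') : False := by
  obtain ⟨h1, h2, h3⟩ := hA
  simp only [RR] at h3
  split_ifs at h3 <;> omega

lemma clash_SS (hmono : ∀ k k', k < k' → k' < ℓ * ℓ → X k < X k')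
    {k k' a b : ℕ} (hlt : k < k')
    (hS : k + 1 < ℓ * ℓ ∧ b = ℓ - 1 ∧ X k ≤ a ∧ a < X (k + 1))
    (hS' : k' + 1 < ℓ * ℓ ∧ b = ℓ - 1 ∧ X k' ≤ a ∧ a < X (k' + 1)) : False := by
  have := hmono_le ℓ X hmono (by (try dsimp only); omega : k + 1 ≤ k') (by (try dsimp only); omega)
  omega

lemma clash_AA (hm : 2 * ℓ < m) (hmono : ∀ k k', k < k' → k' < ℓ * ℓ → X k < X k')
    {j u j' u' a b : ℕ} (hj : j < ℓ) (hu : u < ℓ) (hj' : j' < ℓ) (hu' : u' < ℓ)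
    (hne : ¬(j = j' ∧ u = u'))
    (hA : j + 1 < ℓ ∧ u + 1 < ℓ ∧ b = RR m j u ∧
      X (j * ℓ + u) ≤ a ∧ a < X ((j + 1) * ℓ + (ℓ - 1 - u)))
    (hA' : j' + 1 < ℓ ∧ u' + 1 < ℓ ∧ b = RR m j' u' ∧
      X (j' * ℓ + u') ≤ a ∧ a < X ((j' + 1) * ℓ + (ℓ - 1 - u'))) : False := by
  obtain ⟨hj1, hu1, hb, ha1, ha2⟩ := hA
  obtain ⟨hj'1, hu'1, hb', ha1', ha2'⟩ := hA'
  -- rows must agree; deduce same parity and u = u'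
  have hpar : j % 2 = j' % 2 ∧ u = u' := by
    simp only [RR] at hb hb'
    split_ifs at hb hb' <;> omega
  obtain ⟨hpar, rfl⟩ := hpar
  have hjj : j ≠ j' := fun h => hne ⟨h, rfl⟩
  have key : ∀ j₁ j₂ : ℕ, j₁ % 2 = j₂ % 2 → j₁ < j₂ → j₁ + 1 < ℓ →
      X (j₁ * ℓ + u) ≤ a → a < X ((j₁ + 1) * ℓ + (ℓ - 1 - u)) →
      X (j₂ * ℓ + u) ≤ a → j₂ < ℓ → False := by
    intro j₁ j₂ hp hlt hj₁ hb1 hb2 hb3 hj₂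
    have h2 : j₁ + 2 ≤ j₂ := by (try dsimp only); omega
    have hklt : (j₁ + 1) * ℓ + (ℓ - 1 - u) ≤ j₂ * ℓ + u :=
      le_of_lt (blocklt (by (try dsimp only); omega) (by (try dsimp only); omega))
    have := hmono_le ℓ X hmono hklt (kbound hj₂ hu)
    omega
  rcases lt_or_gt_of_ne hjj with h | h
  · exact key j j' hpar h hj1 ha1 ha2 ha1' hj'
  · exact key j' j hpar.symm h hj'1 ha1' ha2' ha1 hj

lemma models_disj (hm : 2 * ℓ < m) (hmono : ∀ k k', k < k' → k' < ℓ * ℓ → X k < X k')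
    (hY2 : ∀ k, k < ℓ * ℓ → Y k < m - ℓ)
    {j u j' u' : ℕ} (hj : j < ℓ) (hu : u < ℓ) (hj' : j' < ℓ) (hu' : u' < ℓ)
    (hne : ¬(j = j' ∧ u = u')) :
    Disjoint (Model m ℓ X Y j u) (Model m ℓ X Y j' u') := by
  have hkne : j * ℓ + u ≠ j' * ℓ + u' := fun h => hne (keq hu hu' h)
  rw [Set.disjoint_left]
  intro v hv hv'
  have hk : j * ℓ + u < ℓ * ℓ := kbound hj hu
  have hk' : j' * ℓ + u' < ℓ * ℓ := kbound hj' hu'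
  rcases hv with hT | hS | hA <;> rcases hv' with hT' | hS' | hA'
  · -- T T
    rcases Nat.lt_or_ge (j * ℓ + u) (j' * ℓ + u') with h | h
    · have := hmono _ _ h hk'; omega
    · have := hmono _ _ (by (try dsimp only); omega : j' * ℓ + u' < j * ℓ + u) hk; omega
  · exact clash_TS m ℓ X Y hmono hj hu hkne hT hS'
  · exact clash_TA m ℓ X Y hm hmono hY2 hj hu hj' hu' hkne hT hA'
  · exact clash_TS m ℓ X Y hmono hj' hu' (Ne.symm hkne) hT' hS
  · rcases Nat.lt_or_ge (j * ℓ + u) (j' * ℓ + u') with h | h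
    · exact clash_SS ℓ X hmono h hS hS'
    · exact clash_SS ℓ X hmono (by (try dsimp only); omega) hS' hS
  · exact clash_SA m ℓ hm hS.2.1 ⟨hA'.1, hA'.2.1, hA'.2.2.1⟩
  · exact clash_TA m ℓ X Y hm hmono hY2 hj' hu' hj hu (Ne.symm hkne) hT' hA
  · exact clash_SA m ℓ hm hS'.2.1 ⟨hA.1, hA.2.1, hA.2.2.1⟩
  · exact clash_AA m ℓ X hm hmono hj hu hj' hu' hne hA hA'

lemma adj_consec (hm : 2 * ℓ < m) (hXm : ∀ k, k < ℓ * ℓ → X k < m)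
    (hmono : ∀ k k', k < k' → k' < ℓ * ℓ → X k < X k')
    (hY1 : ∀ k, k < ℓ * ℓ → ℓ ≤ Y k)
    {j u j2 u2 : ℕ} (hj : j < ℓ) (hu : u < ℓ) (hj2 : j2 < ℓ) (hu2 : u2 < ℓ)
    (hsucc : j2 * ℓ + u2 = j * ℓ + u + 1) :
    ∃ p ∈ Model m ℓ X Y j u, ∃ q ∈ Model m ℓ X Y j2 u2, (gridGraph m).Adj p q := by
  have hk2 : j * ℓ + u + 1 < ℓ * ℓ := hsucc ▸ kbound hj2 hu2
  have hxk : X (j * ℓ + u) < X (j * ℓ + u + 1) := hmono _ _ (by (try dsimp only); omega) hk2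
  have hX1m : X (j * ℓ + u + 1) < m := hXm _ hk2
  have hbm : ℓ - 1 < m := by (try dsimp only); omega
  refine ⟨(⟨X (j * ℓ + u + 1) - 1, by (try dsimp only); omega⟩, ⟨ℓ - 1, hbm⟩),
    Or.inr (Or.inl ⟨hk2, rfl, by (try dsimp only); omega, by (try dsimp only); omega⟩),
    (⟨X (j * ℓ + u + 1), hX1m⟩, ⟨ℓ - 1, hbm⟩), Or.inl ⟨?_, ?_, ?_⟩, ?_⟩
  · show X (j * ℓ + u + 1) = X (j2 * ℓ + u2)
    rw [hsucc]
  · exact DL_le ℓ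
  · have := UH_ge m ℓ Y hm hY1 hj2 hu2
    dsimp only
    omega
  · rw [grid_adj]
    exact Or.inl ⟨Or.inl (by (try dsimp only); omega), rfl⟩

lemma adj_arc (hm : 2 * ℓ < m) (hXm : ∀ k, k < ℓ * ℓ → X k < m)
    (hmono : ∀ k k', k < k' → k' < ℓ * ℓ → X k < X k')
    (hY1 : ∀ k, k < ℓ * ℓ → ℓ ≤ Y k)
    {j u : ℕ} (hj1 : j + 1 < ℓ) (hu1 : u + 1 < ℓ) :
    ∃ p ∈ Model m ℓ X Y j u, ∃ q ∈ Model m ℓ X Y (j + 1) (ℓ - 1 - u),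
      (gridGraph m).Adj p q := by
  have hkp : (j + 1) * ℓ + (ℓ - 1 - u) < ℓ * ℓ := kbound hj1 (by (try dsimp only); omega)
  have hklt : j * ℓ + u < (j + 1) * ℓ + (ℓ - 1 - u) := blocklt (by (try dsimp only); omega) (by (try dsimp only); omega)
  have hxx : X (j * ℓ + u) < X ((j + 1) * ℓ + (ℓ - 1 - u)) := hmono _ _ hklt hkp
  have hXpm : X ((j + 1) * ℓ + (ℓ - 1 - u)) < m := hXm _ hkp
  have hR : RR m j u < m := by simp only [RR]; split_ifs <;> omega
  refine ⟨(⟨X ((j + 1) * ℓ + (ℓ - 1 - u)) - 1, by (try dsimp only); omega⟩, ⟨RR m j u, hR⟩),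
    Or.inr (Or.inr ⟨hj1, hu1, rfl, by (try dsimp only); omega, by (try dsimp only); omega⟩),
    (⟨X ((j + 1) * ℓ + (ℓ - 1 - u)), hXpm⟩, ⟨RR m j u, hR⟩),
    Or.inl ⟨rfl, ?_, ?_⟩, ?_⟩
  · simp only [DL, RR]; split_ifs <;> omega
  · have hy1 := hY1 _ hkp
    simp only [RR, UH]; split_ifs <;> omega
  · rw [grid_adj]
    exact Or.inl ⟨Or.inl (by (try dsimp only); omega), rfl⟩

/-- index within the block for a grid vertex (snake order). -/
def sig (a : Fin ℓ × Fin ℓ) : ℕ := if a.1.val % 2 = 0 then a.2.val else ℓ - 1 - a.2.val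

lemma sig_lt (a : Fin ℓ × Fin ℓ) : sig ℓ a < ℓ := by
  have h1 := a.1.isLt
  have h2 := a.2.isLt
  unfold sig; split_ifs <;> omega

lemma core (hm : 2 * ℓ < m) (U : Finset (Fin m × Fin m))
    (hXm : ∀ k, k < ℓ * ℓ → X k < m)
    (hmono : ∀ k k', k < k' → k' < ℓ * ℓ → X k < X k')
    (hY1 : ∀ k, k < ℓ * ℓ → ℓ ≤ Y k) (hY2 : ∀ k, k < ℓ * ℓ → Y k < m - ℓ)
    (hXY : ∀ k, k < ℓ * ℓ → ∀ (h1 : X k < m) (h2 : Y k < m),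
      ((⟨X k, h1⟩ : Fin m), (⟨Y k, h2⟩ : Fin m)) ∈ U) :
    ∃ B : Fin ℓ × Fin ℓ → Set (Fin m × Fin m),
      (∀ a, ((gridGraph m).induce (B a)).Connected) ∧
      (Pairwise fun a b => Disjoint (B a) (B b)) ∧
      (∀ a b, (gridGraph ℓ).Adj a b → ∃ u ∈ B a, ∃ v ∈ B b, (gridGraph m).Adj u v) ∧
      (∀ a, ∃ u ∈ B a, u ∈ U) := by
  refine ⟨fun a => Model m ℓ X Y a.1.val (sig ℓ a), ?_, ?_, ?_, ?_⟩
  · -- connectivity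
    intro a
    dsimp only
    have hj : a.1.val < ℓ := a.1.isLt
    have hu : sig ℓ a < ℓ := sig_lt ℓ a
    set j := a.1.val
    set u := sig ℓ a
    have hk : j * ℓ + u < ℓ * ℓ := kbound hj hu
    have hXkm : X (j * ℓ + u) < m := hXm _ hk
    have hbm : ℓ - 1 < m := by (try dsimp only); omega
    have hDL := DL_le ℓ (j := j) (u := u)
    have hUHg := UH_ge m ℓ Y hm hY1 hj hu
    have hcent : ((⟨X (j * ℓ + u), hXkm⟩ : Fin m), (⟨ℓ - 1, hbm⟩ : Fin m)) ∈
        Model m ℓ X Y j u := Or.inl ⟨rfl, hDL, by (try dsimp only); omega⟩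
    apply induce_connected hcent
    rintro ⟨⟨a1, ha1⟩, ⟨b1, hb1⟩⟩ hv
    rcases hv with ⟨hT1, hT2, hT3⟩ | ⟨hS1, hS2, hS3, hS4⟩ | ⟨hA1, hA2, hA3, hA4, hA5⟩
    · dsimp only at hT1 hT2 hT3
      subst hT1
      exact chain_vert ha1 hb1 hbm (fun t ht h1 h2 => Or.inl ⟨rfl, by (try dsimp only); omega, by (try dsimp only); omega⟩)
    · dsimp only at hS1 hS2 hS3 hS4
      subst hS2
      exact chain_horiz hb1 ha1 hXkm
        (fun t ht h1 h2 => Or.inr (Or.inl ⟨hS1, rfl, by (try dsimp only); omega, by (try dsimp only); omega⟩))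
    · dsimp only at hA1 hA2 hA3 hA4 hA5
      subst hA3
      have hRm : RR m j u < m := hb1
      have hDR : DL ℓ j u ≤ RR m j u ∧ RR m j u ≤ UH m ℓ Y j u := by
        have hy1 := hY1 _ hk
        simp only [DL, RR, UH]; split_ifs <;> omega
      refine Relation.ReflTransGen.trans
        (chain_horiz hb1 ha1 hXkm
          (fun t ht h1 h2 => Or.inr (Or.inr ⟨hA1, hA2, rfl, by (try dsimp only); omega, by (try dsimp only); omega⟩)))
        (chain_vert hXkm hb1 hbm
          (fun t ht h1 h2 => Or.inl ⟨rfl, by (try dsimp only); omega, by (try dsimp only); omega⟩))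
  · -- pairwise disjoint
    intro a b hab
    dsimp only
    apply models_disj m ℓ X Y hm hmono hY2 a.1.isLt (sig_lt ℓ a) b.1.isLt (sig_lt ℓ b)
    rintro ⟨h1, h2⟩
    apply hab
    have ha2 := a.2.isLt
    have hb2 := b.2.isLt
    have h3 : a.2.val = b.2.val := by
      unfold sig at h2
      rw [h1] at h2
      split_ifs at h2 <;> omega
    exact Prod.ext (Fin.ext h1) (Fin.ext h3)
  · -- adjacency
    have main_h : ∀ a b : Fin ℓ × Fin ℓ, a.1.val + 1 = b.1.val → a.2 = b.2 →
        ∃ p ∈ Model m ℓ X Y a.1.val (sig ℓ a),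
          ∃ q ∈ Model m ℓ X Y b.1.val (sig ℓ b), (gridGraph m).Adj p q := by
      intro a b h1 h2
      have hj : a.1.val < ℓ := a.1.isLt
      have hjb : b.1.val < ℓ := b.1.isLt
      have hsa := sig_lt ℓ a
      have hi := a.2.isLt
      have heq1 : b.1.val = a.1.val + 1 := h1.symm
      have heq2 : sig ℓ b = ℓ - 1 - sig ℓ a := by
        unfold sig
        rw [heq1, ← h2]
        split_ifs <;> omega
      rcases Nat.lt_or_ge (sig ℓ a + 1) ℓ with hcase | hcase
      · rw [heq1, heq2]
        exact adj_arc m ℓ X Y hm hXm hmono hY1 (by (try dsimp only); omega) hcase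
      · have hs : sig ℓ a = ℓ - 1 := by (try dsimp only); omega
        refine adj_consec m ℓ X Y hm hXm hmono hY1 hj hsa hjb (sig_lt ℓ b) ?_
        have e1 : (a.1.val + 1) * ℓ = a.1.val * ℓ + ℓ := Nat.succ_mul _ _
        rw [heq1, heq2]
        omega
    have main_v : ∀ a b : Fin ℓ × Fin ℓ, a.1 = b.1 → a.2.val + 1 = b.2.val →
        ∃ p ∈ Model m ℓ X Y a.1.val (sig ℓ a),
          ∃ q ∈ Model m ℓ X Y b.1.val (sig ℓ b), (gridGraph m).Adj p q := by
      intro a b h1 h2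
      have hj : a.1.val < ℓ := a.1.isLt
      have hsa := sig_lt ℓ a
      have hsb := sig_lt ℓ b
      have hib := b.2.isLt
      have heq1 : b.1.val = a.1.val := by rw [h1]
      rcases Nat.even_or_odd a.1.val with hpar | hpar
      · -- even: sig b = sig a + 1
        have hp : a.1.val % 2 = 0 := Nat.even_iff.mp hpar
        have hsig : sig ℓ b = sig ℓ a + 1 := by
          unfold sig; rw [heq1, if_pos hp, if_pos hp]; omega
        refine adj_consec m ℓ X Y hm hXm hmono hY1 hj hsa (heq1 ▸ hj) hsb ?_
        rw [heq1, hsig]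
        omega
      · -- odd: sig a = sig b + 1; apply consec to (b-model, a-model) and flip
        have hp : ¬ (a.1.val % 2 = 0) := by
          have := Nat.odd_iff.mp hpar; omega
        have hsig : sig ℓ a = sig ℓ b + 1 := by
          unfold sig; rw [heq1, if_neg hp, if_neg hp]; omega
        obtain ⟨p, hp1, q, hq1, hadj⟩ :=
          adj_consec m ℓ X Y hm hXm hmono hY1 (heq1 ▸ hj) hsb hj hsa
            (by rw [heq1, hsig]; omega)
        exact ⟨q, hq1, p, hp1, hadj.symm⟩
    intro a b hadj
    dsimp only
    rw [grid_adj] at hadj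
    rcases hadj with ⟨hor, heq⟩ | ⟨hor, heq⟩
    · rcases hor with h | h
      · exact main_h a b h heq
      · obtain ⟨p, hp1, q, hq1, hadj⟩ := main_h b a h heq.symm
        exact ⟨q, hq1, p, hp1, hadj.symm⟩
    · rcases hor with h | h
      · exact main_v a b heq h
      · obtain ⟨p, hp1, q, hq1, hadj⟩ := main_v b a heq.symm h
        exact ⟨q, hq1, p, hp1, hadj.symm⟩
  · -- each model meets U
    intro a
    dsimp only
    have hj : a.1.val < ℓ := a.1.isLt
    have hu : sig ℓ a < ℓ := sig_lt ℓ a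
    have hk : a.1.val * ℓ + sig ℓ a < ℓ * ℓ := kbound hj hu
    have hXkm : X (a.1.val * ℓ + sig ℓ a) < m := hXm _ hk
    have hYm : Y (a.1.val * ℓ + sig ℓ a) < m := by have := hY2 _ hk; omega
    refine ⟨(⟨X _, hXkm⟩, ⟨Y _, hYm⟩), Or.inl ⟨rfl, ?_, ?_⟩, hXY _ hk _ _⟩
    · have := DL_le ℓ (j := a.1.val) (u := sig ℓ a)
      have := hY1 _ hk
      dsimp only
      omega
    · exact UH_geY m ℓ Y hm hY2 hj hu

end Core

lemma connected_swap {m : ℕ} (S : Set (Fin m × Fin m))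
    (h : ((gridGraph m).induce S).Connected) :
    ((gridGraph m).induce (Prod.swap ⁻¹' S)).Connected := by
  have hne : Nonempty (Prod.swap ⁻¹' (S : Set (Fin m × Fin m)) : Set (Fin m × Fin m)) := by
    obtain ⟨⟨v, hv⟩⟩ := h.nonempty
    refine ⟨⟨v.swap, ?_⟩⟩
    simp only [Set.mem_preimage, Prod.swap_swap]
    exact hv
  refine ⟨fun u v => ?_⟩
  let f : ((gridGraph m).induce S) →g ((gridGraph m).induce (Prod.swap ⁻¹' S)) :=
    ⟨fun w => ⟨w.val.swap, by
        simp only [Set.mem_preimage, Prod.swap_swap]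
        exact w.2⟩,
     fun hadj => grid_adj_swap hadj⟩
  have hr := h.preconnected ⟨u.val.swap, u.2⟩ ⟨v.val.swap, v.2⟩
  have hmap := hr.map f
  have e1 : f ⟨u.val.swap, u.2⟩ = u := Subtype.ext (Prod.swap_swap _)
  have e2 : f ⟨v.val.swap, v.2⟩ = v := Subtype.ext (Prod.swap_swap _)
  rwa [e1, e2] at hmap

lemma column_case (m ℓ : ℕ) (hm : 2 * ℓ < m) (U : Finset (Fin m × Fin m))
    (hUcentral : ↑U ⊆ centralGridVerts m ℓ)
    (hbig : ℓ * ℓ ≤ (U.image Prod.fst).card) :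
    ∃ B : Fin ℓ × Fin ℓ → Set (Fin m × Fin m),
      (∀ a, ((gridGraph m).induce (B a)).Connected) ∧
      (Pairwise fun a b => Disjoint (B a) (B b)) ∧
      (∀ a b, (gridGraph ℓ).Adj a b → ∃ u ∈ B a, ∃ v ∈ B b, (gridGraph m).Adj u v) ∧
      (∀ a, ∃ u ∈ B a, u ∈ U) := by
  classical
  set C := U.image Prod.fst with hC
  have hrep : ∀ c ∈ C, ∃ p, p ∈ U ∧ p.1 = c := by
    intro c hc
    rw [hC, Finset.mem_image] at hc
    obtain ⟨p, hp, hpc⟩ := hc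
    exact ⟨p, hp, hpc⟩
  choose g hgU hgfst using hrep
  let e := C.orderEmbOfFin (rfl : C.card = C.card)
  let pt : ℕ → Fin m × Fin m := fun k =>
    if h : k < ℓ * ℓ then
      g (e ⟨k, lt_of_lt_of_le h hbig⟩) (C.orderEmbOfFin_mem rfl _)
    else (⟨0, by omega⟩, ⟨0, by omega⟩)
  have hptU : ∀ k, k < ℓ * ℓ → pt k ∈ U := by
    intro k h
    simp only [pt, dif_pos h]
    exact hgU _ _
  have hptfst : ∀ k (h : k < ℓ * ℓ), (pt k).1 = e ⟨k, lt_of_lt_of_le h hbig⟩ := by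
    intro k h
    simp only [pt, dif_pos h]
    exact hgfst _ _
  have hcent : ∀ k, k < ℓ * ℓ → pt k ∈ centralGridVerts m ℓ := fun k h => hUcentral (hptU k h)
  obtain ⟨B, h1, h2, h3, h4⟩ := core m ℓ (fun k => (pt k).1.val) (fun k => (pt k).2.val) hm U
    (fun k _ => (pt k).1.isLt)
    (fun k k' hkk hk' => by
      rw [hptfst k (by omega), hptfst k' hk']
      exact e.strictMono (show (⟨k, _⟩ : Fin C.card) < ⟨k', _⟩ from hkk))
    (fun k h => (hcent k h).2.2.1)
    (fun k h => (hcent k h).2.2.2)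
    (fun k h h1' h2' => by
      have heq : ((⟨(pt k).1.val, h1'⟩ : Fin m), (⟨(pt k).2.val, h2'⟩ : Fin m)) = pt k :=
        Prod.ext (Fin.ext rfl) (Fin.ext rfl)
      rw [heq]
      exact hptU k h)
  exact ⟨B, h1, h2, h3, h4⟩

end GMH


/-- Demaine, Fomin, Hajiaghayi, Thilikos. Let `H` be the `m`-grid and
`U` a set of `s` vertices contained in the central `(m − 2ℓ)`-grid of `H`, where
`ℓ = ⌊s^{1/4}⌋` and `m > 2ℓ`. Then `H` contains the `ℓ`-grid as a minor such that the
model (branch set) of each vertex of the `ℓ`-grid intersects `U`. -/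
theorem grid_minor_hitting_set (m s ℓ : ℕ) (hℓ : ℓ = Nat.sqrt (Nat.sqrt s))
    (hm : 2 * ℓ < m) (U : Finset (Fin m × Fin m)) (hUcard : U.card = s)
    (hUcentral : ↑U ⊆ centralGridVerts m ℓ) :
    ∃ B : Fin ℓ × Fin ℓ → Set (Fin m × Fin m),
      (∀ a, ((gridGraph m).induce (B a)).Connected) ∧
      (Pairwise fun a b => Disjoint (B a) (B b)) ∧
      (∀ a b, (gridGraph ℓ).Adj a b → ∃ u ∈ B a, ∃ v ∈ B b, (gridGraph m).Adj u v) ∧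
      (∀ a, ∃ u ∈ B a, u ∈ U) := by
  classical
  rcases Nat.eq_zero_or_pos ℓ with rfl | hℓpos
  · exact ⟨fun _ => ∅, fun a => absurd a.1.isLt (by omega),
      fun a b _ => absurd a.1.isLt (by omega),
      fun a b _ => absurd a.1.isLt (by omega),
      fun a => absurd a.1.isLt (by omega)⟩
  · have hsq : ℓ * ℓ ≤ Nat.sqrt s := by
      rw [hℓ]; exact Nat.sqrt_le (Nat.sqrt s)
    have hs4 : ℓ * ℓ * (ℓ * ℓ) ≤ s := le_trans (Nat.mul_le_mul hsq hsq) (Nat.sqrt_le s)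
    set C1 := U.image Prod.fst with hC1
    set C2 := U.image Prod.snd with hC2
    have hsub : U ⊆ C1 ×ˢ C2 := fun p hp =>
      Finset.mem_product.mpr ⟨Finset.mem_image_of_mem _ hp, Finset.mem_image_of_mem _ hp⟩
    have hcard : s ≤ C1.card * C2.card := by
      calc s = U.card := hUcard.symm
        _ ≤ (C1 ×ˢ C2).card := Finset.card_le_card hsub
        _ = C1.card * C2.card := Finset.card_product _ _
    have hbig : ℓ * ℓ ≤ C1.card ∨ ℓ * ℓ ≤ C2.card := by
      by_contra hcon
      push_neg at hcon
      obtain ⟨h1, h2⟩ := hcon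
      have h3 : C1.card * C2.card ≤ (ℓ * ℓ - 1) * (ℓ * ℓ - 1) :=
        Nat.mul_le_mul (by omega) (by omega)
      have hpos : 0 < ℓ * ℓ := Nat.mul_pos hℓpos hℓpos
      have h4 : (ℓ * ℓ - 1) * (ℓ * ℓ - 1) < ℓ * ℓ * (ℓ * ℓ) := by
        calc (ℓ * ℓ - 1) * (ℓ * ℓ - 1) ≤ (ℓ * ℓ - 1) * (ℓ * ℓ) :=
              Nat.mul_le_mul_left _ (by omega)
          _ < ℓ * ℓ * (ℓ * ℓ) := (Nat.mul_lt_mul_right hpos).mpr (by omega)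
      omega
    rcases hbig with hbig | hbig
    · exact GMH.column_case m ℓ hm U hUcentral hbig
    · set U' := U.image Prod.swap with hU'
      have hU'central : ↑U' ⊆ centralGridVerts m ℓ := by
        intro p hp
        simp only [hU', Finset.coe_image, Set.mem_image, Finset.mem_coe] at hp
        obtain ⟨q, hq, rfl⟩ := hp
        have hc := hUcentral hq
        exact ⟨hc.2.2.1, hc.2.2.2, hc.1, hc.2.1⟩
      have himg : U'.image Prod.fst = C2 := by
        rw [hU', Finset.image_image, hC2]
        rfl
      have hbig' : ℓ * ℓ ≤ (U'.image Prod.fst).card := by rw [himg]; exact hbig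
      obtain ⟨B', h1, h2, h3, h4⟩ := GMH.column_case m ℓ hm U' hU'central hbig'
      refine ⟨fun a => Prod.swap ⁻¹' (B' a.swap), ?_, ?_, ?_, ?_⟩
      · intro a
        exact GMH.connected_swap _ (h1 a.swap)
      · intro a b hab
        have hne : a.swap ≠ b.swap := fun h => hab (Prod.swap_injective h)
        exact (h2 hne).preimage _
      · intro a b hadj
        obtain ⟨u', hu', v', hv', h⟩ := h3 a.swap b.swap (GMH.grid_adj_swap hadj)
        refine ⟨u'.swap, ?_, v'.swap, ?_, GMH.grid_adj_swap h⟩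
        · simpa only [Set.mem_preimage, Prod.swap_swap] using hu'
        · simpa only [Set.mem_preimage, Prod.swap_swap] using hv'
      · intro a
        obtain ⟨u', hu', hUmem⟩ := h4 a.swap
        refine ⟨u'.swap, ?_, ?_⟩
        · simpa only [Set.mem_preimage, Prod.swap_swap] using hu'
        · rw [hU', Finset.mem_image] at hUmem
          obtain ⟨q, hq, hq2⟩ := hUmem
          rwa [← hq2, Prod.swap_swap]
end
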